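/- The allowable Stirling numbers of the first kind d(n,k), defined as the number of placements of n−k rooks on shaded squares of the alternately-shaded staircase board of length n with no two rooks in a column, satisfy d(n,k) = d(n−1,k−1) + ⌈(n−1)/2⌉·d(n−1,k), with d(n,0) = δ_{n,0}, d(n,n) = 1, and d(n,k) = 0 for k > n. -/

import Mathlib

open scoped Classical

/-- Auxiliary count: functions `g : Fin m → ℕ` with `g c ≤ w c` and exactly `r`
nonzero coordinates. -/
noncomputable def cnt (m : ℕ) (w : Fin m → ℕ) (r : ℕ) : ℕ :=
  ((Fintype.piFinset fun c => Finset.range (w c + 1)).filter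
    fun g => (Finset.univ.filter fun c => g c ≠ 0).card = r).card

lemma cnt_zero (m : ℕ) (w : Fin m → ℕ) : cnt m w 0 = 1 := by
  rw [cnt, Finset.card_eq_one]
  refine ⟨fun _ => 0, ?_⟩
  ext g
  rw [Finset.mem_filter, Finset.mem_singleton]
  constructor
  · rintro ⟨-, h⟩
    rw [Finset.card_eq_zero, Finset.filter_eq_empty_iff] at h
    funext c
    have := h (Finset.mem_univ c)
    simpa using this
  · rintro rfl
    refine ⟨?_, ?_⟩
    · rw [Fintype.mem_piFinset]; intro c; simp
    · rw [Finset.card_eq_zero, Finset.filter_eq_empty_iff]; intro c _; simp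

lemma cnt_gt (m : ℕ) (w : Fin m → ℕ) (r : ℕ) (h : m < r) : cnt m w r = 0 := by
  rw [cnt, Finset.card_eq_zero, Finset.filter_eq_empty_iff]
  intro g _ hg
  have h1 := Finset.card_filter_le (Finset.univ : Finset (Fin m)) fun c => g c ≠ 0
  rw [Finset.card_univ, Fintype.card_fin] at h1
  omega

lemma count_nonzero_cons (m : ℕ) (g : Fin (m + 1) → ℕ) :
    (Finset.univ.filter fun c => g c ≠ 0).card
      = (if g 0 ≠ 0 then 1 else 0)
        + (Finset.univ.filter fun c : Fin m => g c.succ ≠ 0).card := by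
  rw [Finset.card_filter, Finset.card_filter, Fin.sum_univ_succ]

lemma cnt_succ (m : ℕ) (w : Fin (m + 1) → ℕ) (r : ℕ) :
    cnt (m + 1) w (r + 1)
      = cnt m (fun c => w c.succ) (r + 1) + w 0 * cnt m (fun c => w c.succ) r := by
  rw [cnt]
  rw [← Finset.card_filter_add_card_filter_not (p := fun g : Fin (m + 1) → ℕ => g 0 = 0)]
  congr 1
  · -- column 0 empty
    rw [cnt]
    refine Finset.card_nbij' (fun g => fun c => g c.succ) (fun h => Fin.cons 0 h) ?_ ?_ ?_ ?_
    · intro g hg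
      simp only [Finset.mem_coe, Finset.mem_filter, Fintype.mem_piFinset, Finset.mem_range] at hg ⊢
      obtain ⟨⟨hmem, hcard⟩, h0⟩ := hg
      refine ⟨fun c => hmem c.succ, ?_⟩
      rw [count_nonzero_cons] at hcard
      simp [h0] at hcard
      exact hcard
    · intro h hh
      simp only [Finset.mem_coe, Finset.mem_filter, Fintype.mem_piFinset, Finset.mem_range] at hh ⊢
      obtain ⟨hmem, hcard⟩ := hh
      refine ⟨⟨?_, ?_⟩, by simp⟩
      · intro c
        refine Fin.cases ?_ ?_ c
        · simp
        · intro i; simpa using hmem i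
      · rw [count_nonzero_cons]
        simp only [Fin.cons_succ, Fin.cons_zero]
        simpa using hcard
    · intro g hg
      simp only [Finset.mem_coe, Finset.mem_filter] at hg
      funext c
      refine Fin.cases ?_ ?_ c
      · simpa using hg.2.symm
      · intro i; simp
    · intro h hh
      funext c
      simp
  · -- column 0 has a rook
    trans (Finset.Ioc 0 (w 0) ×ˢ
        ((Fintype.piFinset fun c : Fin m => Finset.range (w c.succ + 1)).filter
          fun g => (Finset.univ.filter fun c => g c ≠ 0).card = r)).card
    swap
    · rw [Finset.card_product, Nat.card_Ioc, Nat.sub_zero, cnt]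
    refine Finset.card_nbij' (fun g => (g 0, fun c => g c.succ))
      (fun p => Fin.cons p.1 p.2) ?_ ?_ ?_ ?_
    · intro g hg
      simp only [Finset.mem_coe, Finset.mem_filter, Fintype.mem_piFinset, Finset.mem_range,
        Finset.mem_product, Finset.mem_Ioc] at hg ⊢
      obtain ⟨⟨hmem, hcard⟩, h0⟩ := hg
      refine ⟨⟨by omega, by have := hmem 0; omega⟩, fun c => hmem c.succ, ?_⟩
      rw [count_nonzero_cons] at hcard
      rw [if_pos h0] at hcard
      omega
    · intro p hp
      simp only [Finset.mem_coe, Finset.mem_filter, Fintype.mem_piFinset, Finset.mem_range,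
        Finset.mem_product, Finset.mem_Ioc] at hp ⊢
      obtain ⟨⟨hp1, hp2⟩, hmem, hcard⟩ := hp
      refine ⟨⟨?_, ?_⟩, by simp; omega⟩
      · intro c
        refine Fin.cases ?_ ?_ c
        · simp; omega
        · intro i; simpa using hmem i
      · rw [count_nonzero_cons]
        simp only [Fin.cons_succ, Fin.cons_zero]
        rw [if_pos (by omega)]
        omega
    · intro g hg
      funext c
      refine Fin.cases ?_ ?_ c
      · simp
      · intro i; simp
    · intro p hp
      simp

/-- The allowable Stirling number of the first kind `d(n,k)`: the number of placements of
`n - k` rooks, no two in the same column, all lying on shaded squares of the alternately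
shaded staircase board of length `n`.  Column `c` (indexed from the left starting at `0`)
has `n - 1 - c` squares; `f c = 0` encodes an empty column and `f c = b + 1` encodes a
rook with `b` squares below it, the square being shaded exactly when `b` is even.  The
number of rooks `r` is required to satisfy `r + k = n` (so `d(n,k) = 0` when `k > n`). -/
noncomputable def dStir (n k : ℕ) : ℕ :=
  (Finset.univ.filter fun f : Fin (n - 1) → Fin n =>
    (∀ c, (f c : ℕ) ≤ n - 1 - (c : ℕ)) ∧
    (∀ c, (f c : ℕ) ≠ 0 → Even ((f c : ℕ) - 1)) ∧
    (Finset.univ.filter fun c => (f c : ℕ) ≠ 0).card + k = n).card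

lemma dStir_eq_cnt (n k : ℕ) (hk : k ≤ n) :
    dStir n k = cnt (n - 1) (fun c => (n - (c : ℕ)) / 2) (n - k) := by
  rcases Nat.eq_zero_or_pos n with rfl | hn
  · interval_cases k
    rw [cnt_zero, dStir, Finset.card_eq_one]
    refine ⟨Fin.elim0, ?_⟩
    ext f
    simp only [Finset.mem_filter, Finset.mem_univ, true_and, Finset.mem_singleton]
    constructor
    · intro _; funext c; exact c.elim0
    · rintro rfl
      refine ⟨fun c => c.elim0, fun c => c.elim0, ?_⟩
      simp
  · rw [dStir, cnt]
    refine Finset.card_nbij' (fun f c => ((f c : ℕ) + 1) / 2)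
      (fun g c => ⟨(if g c = 0 then 0 else 2 * g c - 1) % n, Nat.mod_lt _ hn⟩) ?_ ?_ ?_ ?_
    · intro f hf
      simp only [Finset.mem_coe, Finset.mem_filter, Finset.mem_univ, true_and, Fintype.mem_piFinset,
        Finset.mem_range] at hf ⊢
      obtain ⟨hle, hev, hcard⟩ := hf
      constructor
      · intro c
        have h1 := hle c
        have h2 : (c : ℕ) < n - 1 := c.isLt
        rcases Nat.eq_zero_or_pos (f c : ℕ) with h | h
        · omega
        · have := hev c (by omega)
          rw [Nat.even_iff] at this
          omega
      · have : (Finset.univ.filter fun c : Fin (n - 1) => ((f c : ℕ) + 1) / 2 ≠ 0)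
            = Finset.univ.filter fun c => (f c : ℕ) ≠ 0 := by
          apply Finset.filter_congr
          intro c _
          constructor <;> intro h <;> omega
        rw [this]
        omega
    · intro g hg
      simp only [Finset.mem_coe, Finset.mem_filter, Finset.mem_univ, true_and, Fintype.mem_piFinset,
        Finset.mem_range] at hg ⊢
      obtain ⟨hmem, hcard⟩ := hg
      have hbound : ∀ c : Fin (n - 1),
          (if g c = 0 then 0 else 2 * g c - 1) < n := by
        intro c
        have h1 := hmem c
        have h2 : (c : ℕ) < n - 1 := c.isLt
        split <;> omega
      refine ⟨?_, ?_, ?_⟩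
      · intro c
        have h1 := hmem c
        have h2 : (c : ℕ) < n - 1 := c.isLt
        rw [Nat.mod_eq_of_lt (hbound c)]
        split <;> omega
      · intro c hc
        rw [Nat.mod_eq_of_lt (hbound c)] at hc ⊢
        rw [Nat.even_iff]
        by_cases h : g c = 0
        · simp [h] at hc
        · rw [if_neg h] at hc ⊢
          omega
      · have : (Finset.univ.filter fun c : Fin (n - 1) =>
            (((if g c = 0 then 0 else 2 * g c - 1) % n : ℕ)) ≠ 0)
            = Finset.univ.filter fun c => g c ≠ 0 := by
          apply Finset.filter_congr
          intro c _
          rw [Nat.mod_eq_of_lt (hbound c)]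
          constructor <;> intro h <;> [skip; skip] <;> by_cases hgc : g c = 0 <;>
            simp [hgc] at h ⊢ <;> omega
        rw [this, hcard]
        omega
    · intro f hf
      simp only [Finset.mem_coe, Finset.mem_filter, Finset.mem_univ, true_and] at hf
      obtain ⟨hle, hev, -⟩ := hf
      funext c
      apply Fin.ext
      have hlt : (f c : ℕ) < n := (f c).isLt
      by_cases h : (f c : ℕ) = 0
      · simp only [h]
        norm_num
      · have := hev c h
        rw [Nat.even_iff] at this
        have h2 : ((f c : ℕ) + 1) / 2 ≠ 0 := by omega
        simp only [if_neg h2]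
        rw [Nat.mod_eq_of_lt (by omega)]
        omega
    · intro g hg
      simp only [Finset.mem_coe, Fintype.mem_piFinset, Finset.mem_range, Finset.mem_filter] at hg
      obtain ⟨hmem, -⟩ := hg
      funext c
      have h1 := hmem c
      have h2 : (c : ℕ) < n - 1 := c.isLt
      by_cases h : g c = 0
      · simp [h]
      · simp only [if_neg h]
        rw [Nat.mod_eq_of_lt (by omega)]
        omega

theorem dStir_recurrence :
    (∀ n k : ℕ, 1 ≤ n → 1 ≤ k → k ≤ n →
      dStir n k = dStir (n - 1) (k - 1) + ((n - 1) + 1) / 2 * dStir (n - 1) k) ∧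
    (∀ n : ℕ, dStir n 0 = if n = 0 then 1 else 0) ∧
    (∀ n : ℕ, dStir n n = 1) ∧
    (∀ n k : ℕ, n < k → dStir n k = 0) := by
  have hzero : ∀ n k : ℕ, n < k → dStir n k = 0 := by
    intro n k h
    rw [dStir, Finset.card_eq_zero, Finset.filter_eq_empty_iff]
    rintro f - ⟨-, -, hc⟩
    omega
  refine ⟨?_, ?_, ?_, hzero⟩
  · intro n k hn hk hkn
    rcases eq_or_lt_of_le hkn with rfl | hlt
    · -- k = n
      rw [dStir_eq_cnt k k le_rfl, Nat.sub_self, cnt_zero]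
      rw [hzero (k - 1) k (by omega)]
      rcases Nat.exists_eq_add_of_le hk with ⟨j, rfl⟩
      simp only [Nat.add_sub_cancel_left, Nat.add_sub_cancel]
      rw [dStir_eq_cnt j j le_rfl, Nat.sub_self, cnt_zero]
      ring
    · -- k < n, so n ≥ 2
      obtain ⟨m, rfl⟩ : ∃ m, n = m + 2 := ⟨n - 2, by omega⟩
      rw [dStir_eq_cnt (m + 2) k (by omega)]
      have h1 : m + 2 - 1 = m + 1 := rfl
      rw [h1]
      have h2 : m + 2 - k = (m + 1 - k) + 1 := by omega
      rw [h2, cnt_succ]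
      have h3 : (fun c : Fin m => (m + 2 - ((Fin.succ c : Fin (m + 1)) : ℕ)) / 2)
          = fun c : Fin m => (m + 1 - (c : ℕ)) / 2 := by
        funext c
        congr 1
        rw [Fin.val_succ]
        omega
      rw [h3]
      rw [dStir_eq_cnt (m + 1) (k - 1) (by omega), dStir_eq_cnt (m + 1) k (by omega)]
      have h4 : m + 1 - 1 = m := rfl
      have h5 : m + 1 - (k - 1) = m + 1 - k + 1 := by omega
      rw [h4, h5]
      simp only [Fin.val_zero, Nat.sub_zero]
  · intro n
    rcases Nat.eq_zero_or_pos n with rfl | hn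
    · rw [if_pos rfl, dStir_eq_cnt 0 0 le_rfl, cnt_zero]
    · rw [if_neg (by omega), dStir_eq_cnt n 0 (by omega), Nat.sub_zero,
        cnt_gt _ _ _ (by omega)]
  · intro n
    rw [dStir_eq_cnt n n le_rfl, Nat.sub_self, cnt_zero]
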